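/- Let G be a finite graph, 𝒜 its independent sets, and for ρ > 0 let π_ρ(A) = ρ^{|A|}/∑_{B∈𝒜} ρ^{|B|}. For each vertex i define x_i(ρ) = ∑_{A ∈ 𝒜 : i ∈ A ∪ U_A} π_ρ(A), where U_A is the set of vertices not in A and not adjacent to any vertex of A. Then as ρ → ∞, x_i(ρ) → η_i(G)/η(G), where η(G) is the number of maximum independent sets and η_i(G) the number of maximum independent sets containing i. -/
import Mathlib


open Finset

variable {V : Type*} [Fintype V] [DecidableEq V]

/-- `A` is an independent set of vertices of `G`. -/
def IsIndep (G : SimpleGraph V) (A : Finset V) : Prop :=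
  ∀ i ∈ A, ∀ j ∈ A, ¬ G.Adj i j

instance (G : SimpleGraph V) [DecidableRel G.Adj] : DecidablePred (IsIndep G) := fun A =>
  inferInstanceAs (Decidable (∀ i ∈ A, ∀ j ∈ A, ¬ G.Adj i j))

/-- the collection of all independent sets of `G`. -/
def indepSets (G : SimpleGraph V) [DecidableRel G.Adj] : Finset (Finset V) :=
  univ.filter (IsIndep G)

/-- the independence number of `G`. -/
def indepNum (G : SimpleGraph V) [DecidableRel G.Adj] : ℕ :=
  (indepSets G).sup Finset.card

/-- the collection of maximum independent sets of `G`. -/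
def maxIndepSets (G : SimpleGraph V) [DecidableRel G.Adj] : Finset (Finset V) :=
  (indepSets G).filter (fun A => A.card = indepNum G)

/-- `η(G)`: the number of maximum independent sets of `G`. -/
def eta (G : SimpleGraph V) [DecidableRel G.Adj] : ℕ := (maxIndepSets G).card

/-- `η_i(G)`: the number of maximum independent sets of `G` containing `i`. -/
def etaV (G : SimpleGraph V) [DecidableRel G.Adj] (i : V) : ℕ :=
  ((maxIndepSets G).filter (fun A => i ∈ A)).card

/-- `U_A`: the vertices outside `A` with no neighbor in `A`. -/
def backoffSet (G : SimpleGraph V) [DecidableRel G.Adj] (A : Finset V) : Finset V :=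
  univ.filter (fun j => j ∉ A ∧ ∀ k ∈ A, ¬ G.Adj j k)

/-- the stationary probability of independent set `A` under uniform access intensity `ρ`. -/
noncomputable def piU (G : SimpleGraph V) [DecidableRel G.Adj] (ρ : ℝ) (A : Finset V) : ℝ :=
  ρ ^ A.card / ∑ B ∈ indepSets G, ρ ^ B.card

private lemma aux_count (T : Finset (Finset V)) (n : ℕ) (h : ∀ A ∈ T, A.card ≤ n) :
    Filter.Tendsto (fun ρ : ℝ => (∑ A ∈ T, ρ ^ A.card) / ρ ^ n) Filter.atTop
      (nhds ((T.filter (fun A => A.card = n)).card : ℝ)) := by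
  have hrw : (fun ρ : ℝ => (∑ A ∈ T, ρ ^ A.card) / ρ ^ n)
      = fun ρ : ℝ => ∑ A ∈ T, ρ ^ A.card / ρ ^ n := by
    funext ρ; rw [Finset.sum_div]
  rw [hrw]
  have hc : ((T.filter (fun A => A.card = n)).card : ℝ)
      = ∑ A ∈ T, if A.card = n then (1:ℝ) else 0 := by
    rw [Finset.sum_boole]
  rw [hc]
  apply tendsto_finset_sum
  intro A hA
  rcases eq_or_lt_of_le (h A hA) with heq | hlt
  · rw [if_pos heq]
    apply Filter.Tendsto.congr' _ tendsto_const_nhds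
    filter_upwards [Filter.eventually_gt_atTop (0:ℝ)] with ρ hρ
    rw [heq, div_self (pow_ne_zero _ (ne_of_gt hρ))]
  · simp only [ne_of_lt hlt, if_false]
    exact tendsto_pow_div_pow_atTop_zero hlt

/-- As `ρ → ∞`, the fraction of time `x_i(ρ)` during which cell `i` is not blocked tends
to `η_i(G)/η(G)`. -/
theorem stmt9 {V : Type*} [Fintype V] [DecidableEq V]
    (G : SimpleGraph V) [DecidableRel G.Adj] (i : V) :
    Filter.Tendsto
      (fun ρ : ℝ =>
        ∑ A ∈ (indepSets G).filter (fun A => i ∈ A ∪ backoffSet G A), piU G ρ A)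
      Filter.atTop (nhds ((etaV G i : ℝ) / (eta G : ℝ))) := by
  classical
  set n := indepNum G with hn
  set S := (indepSets G).filter (fun A => i ∈ A ∪ backoffSet G A) with hS
  -- the maximum-card elements of S are exactly max indep sets containing i
  have hkey : S.filter (fun A => A.card = n) = (maxIndepSets G).filter (fun A => i ∈ A) := by
    ext A
    simp only [hS, Finset.mem_filter, maxIndepSets, Finset.mem_union]
    constructor
    · rintro ⟨⟨hind, hi⟩, hcard⟩
      refine ⟨⟨hind, hcard⟩, ?_⟩
      rcases hi with hi | hi
      · exact hi
      · exfalso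
        simp only [backoffSet, Finset.mem_filter] at hi
        obtain ⟨-, hiA, hadj⟩ := hi
        have hins : insert i A ∈ indepSets G := by
          simp only [indepSets, Finset.mem_filter, Finset.mem_univ, true_and]
          intro a ha b hb
          simp only [Finset.mem_insert] at ha hb
          rcases ha with rfl | ha <;> rcases hb with rfl | hb
          · exact G.irrefl
          · exact hadj b hb
          · intro hcon; exact hadj a ha hcon.symm
          · have hindA : IsIndep G A := by
              simpa [indepSets, IsIndep] using hind
            exact hindA a ha b hb
        have hle : (insert i A).card ≤ n := Finset.le_sup hins
        rw [Finset.card_insert_of_notMem hiA, hcard] at hle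
        omega
    · rintro ⟨⟨hind, hcard⟩, hi⟩
      exact ⟨⟨hind, Or.inl hi⟩, hcard⟩
  have hden : (indepSets G).filter (fun A => A.card = n) = maxIndepSets G := rfl
  -- eta positivity
  have hetapos : 0 < eta G := by
    have hempty : (∅ : Finset V) ∈ indepSets G := by
      simp [indepSets, IsIndep]
    obtain ⟨B, hB, hBsup⟩ := Finset.exists_mem_eq_sup (indepSets G) ⟨∅, hempty⟩ Finset.card
    have : B ∈ maxIndepSets G := by
      simp only [maxIndepSets, Finset.mem_filter]
      exact ⟨hB, hBsup.symm⟩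
    exact Finset.card_pos.mpr ⟨B, this⟩
  have hbound : ∀ A ∈ indepSets G, A.card ≤ n := fun A hA => Finset.le_sup hA
  have hN : Filter.Tendsto (fun ρ : ℝ => (∑ A ∈ S, ρ ^ A.card) / ρ ^ n) Filter.atTop
      (nhds (etaV G i : ℝ)) := by
    have := aux_count S n (fun A hA => hbound A (Finset.mem_filter.mp hA).1)
    rwa [hkey] at this
  have hD : Filter.Tendsto (fun ρ : ℝ => (∑ A ∈ indepSets G, ρ ^ A.card) / ρ ^ n)
      Filter.atTop (nhds (eta G : ℝ)) := by
    have := aux_count (indepSets G) n hbound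
    rwa [hden] at this
  have hq := hN.div hD (by exact_mod_cast hetapos.ne')
  apply hq.congr'
  filter_upwards [Filter.eventually_gt_atTop (0:ℝ)] with ρ hρ
  have hρn : (ρ : ℝ) ^ n ≠ 0 := pow_ne_zero _ (ne_of_gt hρ)
  have hDpos : (0:ℝ) < ∑ B ∈ indepSets G, ρ ^ B.card :=
    Finset.sum_pos (fun B _ => pow_pos hρ _) ⟨∅, by simp [indepSets, IsIndep]⟩
  simp only [Pi.div_apply, piU, ← Finset.sum_div]
  field_simp
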